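/- For every r > 1, the constant A_r = 4^{-1/(r-1)} (r+1)^{(r+1)/(r-1)} r^{-r/(r-1)} satisfies 1 < A_r < 2, and moreover (log 2)/(log A_r) ≤ (r+1)/2. -/

import Mathlib

open Real Set

private lemma contOnIci (c : ℝ) (hc : 0 ≤ c) :
    ContinuousOn (fun x : ℝ => Real.log (x + c)) (Set.Ici 1) := by
  apply Real.continuousOn_log.comp ((continuous_id.add continuous_const).continuousOn)
  intro x hx
  simp only [Set.mem_Ici] at hx
  simp only [Set.mem_compl_iff, Set.mem_singleton_iff]
  intro h; simp only [Pi.add_apply, id_eq] at h; nlinarith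

private lemma contOnIci' : ContinuousOn Real.log (Set.Ici 1) :=
  (contOnIci 0 le_rfl).congr (by intro x _; simp)

private lemma hd_log1 {x : ℝ} (hx : 0 < x) :
    HasDerivAt (fun y : ℝ => Real.log (y + 1)) (1 / (x + 1)) x := by
  have := ((hasDerivAt_id x).add_const 1).log
    (by intro h; simp only [id_eq] at h; linarith)
  simpa using this

private lemma f_lemma (r : ℝ) (hr : 1 < r) :
    2 * Real.log 2 < (r + 1) * Real.log (r + 1) - r * Real.log r := by
  set f : ℝ → ℝ := fun x => (x + 1) * Real.log (x + 1) - x * Real.log x with hf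
  have hmono : StrictMonoOn f (Set.Ici 1) := by
    apply strictMonoOn_of_hasDerivWithinAt_pos (convex_Ici 1)
      (f' := fun x => Real.log (x + 1) - Real.log x)
    · exact ((continuousOn_id.add continuousOn_const).mul (contOnIci 1 one_pos.le)).sub
        (continuousOn_id.mul contOnIci')
    · rw [interior_Ici]
      intro x hx
      have hx0 : (0:ℝ) < x := lt_trans one_pos hx
      have h1 : HasDerivAt (fun y : ℝ => (y + 1) * Real.log (y + 1))
          (1 * Real.log (x + 1) + (x + 1) * (1 / (x + 1))) x :=
        ((hasDerivAt_id x).add_const 1).mul (hd_log1 hx0)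
      have h2 : HasDerivAt (fun y : ℝ => y * Real.log y)
          (1 * Real.log x + x * x⁻¹) x :=
        (hasDerivAt_id x).mul (Real.hasDerivAt_log hx0.ne')
      have := (h1.sub h2).hasDerivWithinAt (s := Set.Ioi 1)
      refine this.congr_deriv ?_
      field_simp
      ring
    · rw [interior_Ici]
      intro x hx
      have hx0 : (0:ℝ) < x := lt_trans one_pos hx
      have : Real.log x < Real.log (x + 1) := Real.log_lt_log hx0 (by linarith)
      linarith
  have := hmono (Set.self_mem_Ici) (Set.mem_Ici.2 hr.le) hr
  simp only [hf] at this
  norm_num at this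
  linarith [this]

private lemma g_lemma (r : ℝ) (hr : 1 < r) :
    (r + 1) * Real.log (r + 1) - r * Real.log r < (r + 1) * Real.log 2 := by
  set g : ℝ → ℝ := fun x => (x + 1) * Real.log 2 + x * Real.log x
    - (x + 1) * Real.log (x + 1) with hg
  have hmono : StrictMonoOn g (Set.Ici 1) := by
    apply strictMonoOn_of_hasDerivWithinAt_pos (convex_Ici 1)
      (f' := fun x => Real.log 2 + Real.log x - Real.log (x + 1))
    · exact (((continuousOn_id.add continuousOn_const).mul continuousOn_const).add
        (continuousOn_id.mul contOnIci')).sub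
        ((continuousOn_id.add continuousOn_const).mul (contOnIci 1 one_pos.le))
    · rw [interior_Ici]
      intro x hx
      have hx0 : (0:ℝ) < x := lt_trans one_pos hx
      have h0 : HasDerivAt (fun y : ℝ => (y + 1) * Real.log 2) (1 * Real.log 2) x :=
        ((hasDerivAt_id x).add_const 1).mul_const _
      have h1 : HasDerivAt (fun y : ℝ => y * Real.log y)
          (1 * Real.log x + x * x⁻¹) x :=
        (hasDerivAt_id x).mul (Real.hasDerivAt_log hx0.ne')
      have h2 : HasDerivAt (fun y : ℝ => (y + 1) * Real.log (y + 1))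
          (1 * Real.log (x + 1) + (x + 1) * (1 / (x + 1))) x :=
        ((hasDerivAt_id x).add_const 1).mul (hd_log1 hx0)
      have := ((h0.add h1).sub h2).hasDerivWithinAt (s := Set.Ioi 1)
      refine this.congr_deriv ?_
      field_simp
      ring
    · rw [interior_Ici]
      intro x hx
      have hx0 : (0:ℝ) < x := lt_trans one_pos hx
      have hx1 : (1:ℝ) < x := hx
      have h2x : Real.log (x + 1) < Real.log (2 * x) :=
        Real.log_lt_log (by linarith) (by linarith)
      rw [Real.log_mul (by norm_num) hx0.ne'] at h2x
      linarith
  have := hmono (Set.self_mem_Ici) (Set.mem_Ici.2 hr.le) hr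
  simp only [hg] at this
  norm_num at this
  linarith [this]

private lemma p_lemma (r : ℝ) (hr : 1 ≤ r) :
    0 ≤ 2 * (r + 1) * Real.log (r + 1) - (2 * r + 1) * Real.log r - 4 * Real.log 2 := by
  set p : ℝ → ℝ := fun x => 2 * (x + 1) * Real.log (x + 1)
    - (2 * x + 1) * Real.log x - 4 * Real.log 2 with hp
  have hmono : MonotoneOn p (Set.Ici 1) := by
    apply monotoneOn_of_hasDerivWithinAt_nonneg (convex_Ici 1)
      (f' := fun x => 2 * Real.log (x + 1) - 2 * Real.log x - 1 / x)
    · exact (((continuousOn_const.mul (continuousOn_id.add continuousOn_const)).mul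
        (contOnIci 1 one_pos.le)).sub
        ((continuousOn_const.mul continuousOn_id |>.add continuousOn_const).mul contOnIci')).sub
        continuousOn_const
    · rw [interior_Ici]
      intro x hx
      have hx0 : (0:ℝ) < x := lt_trans one_pos hx
      have h1 : HasDerivAt (fun y : ℝ => 2 * (y + 1) * Real.log (y + 1))
          ((2 * 1) * Real.log (x + 1) + (2 * (x + 1)) * (1 / (x + 1))) x :=
        (((hasDerivAt_id x).add_const 1).const_mul 2).mul (hd_log1 hx0)
      have h2 : HasDerivAt (fun y : ℝ => (2 * y + 1) * Real.log y)
          ((2 * 1 + 0) * Real.log x + (2 * x + 1) * x⁻¹) x := by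
        exact (((hasDerivAt_id x).const_mul 2).add_const 1 |>.congr_deriv (by ring)).mul
          (Real.hasDerivAt_log hx0.ne')
      have := ((h1.sub h2).sub_const (4 * Real.log 2)).hasDerivWithinAt (s := Set.Ioi 1)
      refine this.congr_deriv ?_
      field_simp
      ring
    · rw [interior_Ici]
      intro x hx
      have hx0 : (0:ℝ) < x := lt_trans one_pos hx
      have hx1 : (1:ℝ) < x := hx
      have key : Real.log x - Real.log (x + 1) ≤ x / (x + 1) - 1 := by
        have := Real.log_le_sub_one_of_pos (x := x / (x + 1)) (by positivity)
        rwa [Real.log_div hx0.ne' (by linarith)] at this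
      have h1 : x / (x + 1) - 1 = -(1 / (x + 1)) := by field_simp; ring
      have h2 : 1 / x ≤ 2 / (x + 1) := by
        rw [div_le_div_iff₀ hx0 (by linarith)]; linarith
      have h3 : 2 / (x + 1) = 2 * (1 / (x + 1)) := by ring
      rw [h1] at key
      linarith
  have := hmono (Set.self_mem_Ici) (Set.mem_Ici.2 hr) hr
  simp only [hp] at this
  norm_num at this
  linarith [this]

private lemma h_lemma (r : ℝ) (hr : 1 ≤ r) :
    4 * r * Real.log 2 ≤ (r + 1) ^ 2 * Real.log (r + 1) - r * (r + 1) * Real.log r := by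
  set h : ℝ → ℝ := fun x => (x + 1) ^ 2 * Real.log (x + 1)
    - x * (x + 1) * Real.log x - 4 * x * Real.log 2 with hh
  have hmono : MonotoneOn h (Set.Ici 1) := by
    apply monotoneOn_of_hasDerivWithinAt_nonneg (convex_Ici 1)
      (f' := fun x => 2 * (x + 1) * Real.log (x + 1) - (2 * x + 1) * Real.log x
        - 4 * Real.log 2)
    · exact ((((continuousOn_id.add continuousOn_const).pow 2).mul
        (contOnIci 1 one_pos.le)).sub
        ((continuousOn_id.mul (continuousOn_id.add continuousOn_const)).mul contOnIci')).sub
        ((continuousOn_const.mul continuousOn_id).mul continuousOn_const)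
    · rw [interior_Ici]
      intro x hx
      have hx0 : (0:ℝ) < x := lt_trans one_pos hx
      have h1 : HasDerivAt (fun y : ℝ => (y + 1) ^ 2 * Real.log (y + 1))
          ((2 * (x + 1) ^ 1 * 1) * Real.log (x + 1) + (x + 1) ^ 2 * (1 / (x + 1))) x :=
        (((hasDerivAt_id x).add_const 1).pow 2).mul (hd_log1 hx0)
      have h2 : HasDerivAt (fun y : ℝ => y * (y + 1) * Real.log y)
          ((1 * (x + 1) + x * 1) * Real.log x + (x * (x + 1)) * x⁻¹) x :=
        ((hasDerivAt_id x).mul ((hasDerivAt_id x).add_const 1)).mul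
          (Real.hasDerivAt_log hx0.ne')
      have h3 : HasDerivAt (fun y : ℝ => 4 * y * Real.log 2) (4 * Real.log 2) x := by
        have := ((hasDerivAt_id x).const_mul 4).mul_const (Real.log 2)
        simpa using this
      have := ((h1.sub h2).sub h3).hasDerivWithinAt (s := Set.Ioi 1)
      refine this.congr_deriv ?_
      field_simp
      ring
    · rw [interior_Ici]
      intro x hx
      exact p_lemma x (le_of_lt hx)
  have := hmono (Set.self_mem_Ici) (Set.mem_Ici.2 hr) hr
  simp only [hh] at this
  norm_num at this
  linarith [this]

/-- For `r > 1`, the constant `A_r = 4^(-1/(r-1)) (r+1)^((r+1)/(r-1)) r^(-r/(r-1))`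
satisfies `1 < A_r < 2`, and moreover `(log 2)/(log A_r) ≤ (r+1)/2`. -/
theorem A_r_bounds (r : ℝ) (hr : 1 < r) :
    1 < 4 ^ (-1 / (r - 1)) * (r + 1) ^ ((r + 1) / (r - 1)) * r ^ (-r / (r - 1)) ∧
    4 ^ (-1 / (r - 1)) * (r + 1) ^ ((r + 1) / (r - 1)) * r ^ (-r / (r - 1)) < 2 ∧
    Real.log 2 /
        Real.log (4 ^ (-1 / (r - 1)) * (r + 1) ^ ((r + 1) / (r - 1)) * r ^ (-r / (r - 1))) ≤
      (r + 1) / 2 := by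
  have hr0 : (0:ℝ) < r := lt_trans one_pos hr
  have hr1 : (0:ℝ) < r + 1 := by linarith
  have hs : (0:ℝ) < r - 1 := by linarith
  have h4 : (0:ℝ) < 4 := by norm_num
  set A : ℝ := 4 ^ (-1 / (r - 1)) * (r + 1) ^ ((r + 1) / (r - 1)) * r ^ (-r / (r - 1)) with hA
  have hA0 : 0 < A := by
    apply mul_pos (mul_pos _ _) <;> first
      | exact Real.rpow_pos_of_pos h4 _
      | exact Real.rpow_pos_of_pos hr1 _
      | exact Real.rpow_pos_of_pos hr0 _
  have l4 : Real.log 4 = 2 * Real.log 2 := by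
    rw [show (4:ℝ) = 2 ^ 2 by norm_num, Real.log_pow]; push_cast; ring
  have logA : Real.log A =
      ((r + 1) * Real.log (r + 1) - r * Real.log r - 2 * Real.log 2) / (r - 1) := by
    rw [hA, Real.log_mul (by positivity) (by positivity),
      Real.log_mul (by positivity) (by positivity),
      Real.log_rpow h4, Real.log_rpow hr1, Real.log_rpow hr0, l4]
    field_simp
    ring
  have hfr := f_lemma r hr
  have logA_pos : 0 < Real.log A := by
    rw [logA]
    exact div_pos (by linarith) hs
  refine ⟨(Real.log_pos_iff hA0.le).mp logA_pos, ?_, ?_⟩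
  · have : Real.log A < Real.log 2 := by
      rw [logA, div_lt_iff₀ hs]
      have := g_lemma r hr
      nlinarith
    exact (Real.log_lt_log_iff hA0 two_pos).mp this
  · rw [div_le_iff₀ logA_pos, logA]
    have key : (r + 1) / 2 * (((r + 1) * Real.log (r + 1) - r * Real.log r
        - 2 * Real.log 2) / (r - 1))
        = ((r + 1) * ((r + 1) * Real.log (r + 1) - r * Real.log r - 2 * Real.log 2))
          / (2 * (r - 1)) := by field_simp
    rw [key, le_div_iff₀ (by linarith)]
    have := h_lemma r hr.le
    nlinarith
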